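/- Upper bound on Rawlsian inequality: let P be a school choice problem with n ≥ 2 ordinary schools (besides the null school), in which every student ranks every ordinary school above the null school and the total quota of ordinary schools is at least |I|. Then every stable-dominating matching ν satisfies 2 · max_{i∈I} rk_i(ν(i)) ≤ n · min_μ max_{i∈I} rk_i(μ(i)), where the minimum is over all matchings μ of P. -/

import Mathlib

/-!
A school choice problem: finitely many students `I` and schools `S`
(with a distinguished null school of quota `|I|`).  Each student `i` has a
strict preference over schools represented by its rank function
`rk i : S → ℕ` (a bijection onto `{1, …, |S|}`, where rank 1 is the most
preferred school); each school `s` has a quota `quota s ≥ 1` and a strict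
priority over students represented by `prio s : I → ℕ`
(`i ▷_s j` iff `prio s i < prio s j`).
-/
structure SchoolChoice (I S : Type) [Fintype I] [Fintype S]
    [DecidableEq I] [DecidableEq S] where
  nullSchool : S
  quota : S → ℕ
  rk : I → S → ℕ
  prio : S → I → ℕ
  quota_pos : ∀ s : S, 1 ≤ quota s
  quota_null : quota nullSchool = Fintype.card I
  rk_inj : ∀ i : I, Function.Injective (rk i)
  rk_mem : ∀ (i : I) (s : S), rk i s ∈ Finset.Icc 1 (Fintype.card S)
  prio_inj : ∀ s : S, Function.Injective (prio s)

namespace SchoolChoice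

open scoped Classical

variable {I S : Type} [Fintype I] [Fintype S] [DecidableEq I] [DecidableEq S]

/-- `μ` is a matching: no school is assigned more students than its quota. -/
def IsMatching (P : SchoolChoice I S) (μ : I → S) : Prop :=
  ∀ s : S, (Finset.univ.filter fun i => μ i = s).card ≤ P.quota s

/-- Given the sets `R i` of schools that have rejected student `i` so far,
student `i` proposes to her most preferred school that has not rejected her. -/
noncomputable def propose (P : SchoolChoice I S) (R : I → Finset S) (i : I) : S :=
  if h : (Finset.univ \ R i).Nonempty then
    (Finset.exists_min_image (Finset.univ \ R i) (P.rk i) h).choose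
  else P.nullSchool

/-- At the DA round with rejection state `R`, school `s` rejects student `i`:
`i` applies to `s` and at least `quota s` applicants to `s` have higher priority. -/
def rejectsAt (P : SchoolChoice I S) (R : I → Finset S) (s : S) (i : I) : Prop :=
  P.propose R i = s ∧
    P.quota s ≤ (Finset.univ.filter fun j =>
      P.propose R j = s ∧ P.prio s j < P.prio s i).card

/-- One round of student-proposing Deferred Acceptance: record new rejections. -/
noncomputable def stepR (P : SchoolChoice I S) (R : I → Finset S) : I → Finset S :=
  fun i => R i ∪ (Finset.univ.filter fun s => P.rejectsAt R s i)

/-- Rejection state after `n` rounds of Deferred Acceptance. -/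
noncomputable def daR (P : SchoolChoice I S) : ℕ → I → Finset S
  | 0 => fun _ => (∅ : Finset S)
  | n + 1 => P.stepR (P.daR n)

/-- The outcome of the student-proposing Deferred Acceptance algorithm:
iterate rounds until no rejection occurs (which happens within
`|I|·|S| + 1` rounds); each student is matched to the school holding her. -/
noncomputable def DA (P : SchoolChoice I S) : I → S :=
  P.propose (P.daR (Fintype.card I * Fintype.card S + 1))

/-- A matching `ν` is stable-dominating if every student weakly prefers
`ν` to the DA outcome. -/
def StableDominating (P : SchoolChoice I S) (ν : I → S) : Prop :=
  P.IsMatching ν ∧ ∀ i : I, P.rk i (ν i) ≤ P.rk i (P.DA i)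

/-- Student `i` is unimprovable: every stable-dominating matching assigns `i`
to her DA school. -/
def Unimprovable (P : SchoolChoice I S) (i : I) : Prop :=
  ∀ ν : I → S, P.StableDominating ν → ν i = P.DA i

/-- Edge of the envy digraph `G^DA(P)`: `i` prefers `j`'s DA school to her own. -/
def Envy (P : SchoolChoice I S) (i j : I) : Prop :=
  P.rk i (P.DA j) < P.rk i (P.DA i)

/-- Student `i` lies on a directed cycle of the envy digraph `G^DA(P)`. -/
def OnCycle (P : SchoolChoice I S) (i : I) : Prop :=
  ∃ (m : ℕ) (c : ℕ → I), 0 < m ∧ c 0 = i ∧ c m = i ∧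
    ∀ k < m, P.Envy (c k) (c (k + 1))

/-- Student `i` desires school `s` in matching `μ`. -/
def Desires (P : SchoolChoice I S) (μ : I → S) (i : I) (s : S) : Prop :=
  P.rk i s < P.rk i (μ i)

/-- `μ` is non-wasteful: every desired school is filled to quota. -/
def NonWasteful (P : SchoolChoice I S) (μ : I → S) : Prop :=
  ∀ s : S, (∃ i : I, P.Desires μ i s) →
    (Finset.univ.filter fun i => μ i = s).card = P.quota s

/-- `μ` is stable: a non-wasteful matching with no priority violations. -/
def Stable (P : SchoolChoice I S) (μ : I → S) : Prop :=
  P.IsMatching μ ∧ P.NonWasteful μ ∧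
    ¬ ∃ (i j : I) (s : S), P.Desires μ i s ∧ μ j = s ∧ P.prio s i < P.prio s j

/-- `μ` Pareto-dominates `ν`. -/
def ParetoDominates (P : SchoolChoice I S) (μ ν : I → S) : Prop :=
  (∀ i : I, P.rk i (μ i) ≤ P.rk i (ν i)) ∧ ∃ i : I, P.rk i (μ i) < P.rk i (ν i)

/-- `μ` is a Pareto-efficient matching. -/
def ParetoEfficient (P : SchoolChoice I S) (μ : I → S) : Prop :=
  P.IsMatching μ ∧ ∀ ν : I → S, P.IsMatching ν → ¬ P.ParetoDominates ν μ

end SchoolChoice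

namespace SchoolChoice

open Finset

open scoped Classical

variable {I S : Type} [Fintype I] [Fintype S] [DecidableEq I] [DecidableEq S]

/-- Applicants to school `s` at rejection state `R`. -/
noncomputable def App (P : SchoolChoice I S) (R : I → Finset S) (s : S) : Finset I :=
  univ.filter fun j => P.propose R j = s

lemma mem_App {P : SchoolChoice I S} {R : I → Finset S} {s : S} {j : I} :
    j ∈ P.App R s ↔ P.propose R j = s := by simp [App]

lemma propose_spec (P : SchoolChoice I S) (R : I → Finset S) (i : I)
    (h : (univ \ R i).Nonempty) :
    P.propose R i ∈ univ \ R i ∧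
      ∀ s ∈ univ \ R i, P.rk i (P.propose R i) ≤ P.rk i s := by
  rw [propose, dif_pos h]
  exact (Finset.exists_min_image (univ \ R i) (P.rk i) h).choose_spec

lemma rejectsAt_filter_eq (P : SchoolChoice I S) (R : I → Finset S) (s : S) (i : I) :
    (univ.filter fun j => P.propose R j = s ∧ P.prio s j < P.prio s i)
      = (P.App R s).filter fun j => P.prio s j < P.prio s i := by
  simp [App, filter_filter]

lemma quota_add_one_le {P : SchoolChoice I S} {R : I → Finset S} {s : S} {i : I}
    (h : P.rejectsAt R s i) : P.quota s + 1 ≤ (P.App R s).card := by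
  have hi : i ∈ P.App R s := mem_App.2 h.1
  have hsub : (univ.filter fun j => P.propose R j = s ∧ P.prio s j < P.prio s i)
      ⊆ (P.App R s).erase i := by
    intro j hj
    simp only [mem_filter, mem_univ, true_and] at hj
    exact mem_erase.2 ⟨fun hji => absurd hj.2 (by simp [hji]), mem_App.2 hj.1⟩
  have h2 := h.2
  have h3 := card_le_card hsub
  have h4 : ((P.App R s).erase i).card = (P.App R s).card - 1 :=
    card_erase_of_mem hi
  have h5 : 1 ≤ (P.App R s).card := card_pos.2 ⟨i, hi⟩
  omega

lemma R_subset_stepR (P : SchoolChoice I S) (R : I → Finset S) (j : I) :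
    R j ⊆ P.stepR R j := by
  intro t ht; simp [stepR, ht]

lemma propose_step_eq {P : SchoolChoice I S} {R : I → Finset S} {j : I} {s : S}
    (hnull : P.nullSchool ∉ R j) (hj : P.propose R j = s)
    (hrej : ¬ P.rejectsAt R s j) : P.propose (P.stepR R) j = s := by
  have hne : (univ \ R j).Nonempty :=
    ⟨P.nullSchool, mem_sdiff.2 ⟨mem_univ _, hnull⟩⟩
  obtain ⟨hmem, hmin⟩ := P.propose_spec R j hne
  rw [hj] at hmem hmin
  have hsR' : s ∉ P.stepR R j := by
    simp only [stepR, mem_union, mem_filter, mem_univ, true_and]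
    push_neg
    exact ⟨(mem_sdiff.1 hmem).2, hrej⟩
  have hne' : (univ \ P.stepR R j).Nonempty := ⟨s, mem_sdiff.2 ⟨mem_univ _, hsR'⟩⟩
  obtain ⟨hmem', hmin'⟩ := P.propose_spec (P.stepR R) j hne'
  have hsub : univ \ P.stepR R j ⊆ univ \ R j :=
    sdiff_subset_sdiff (Finset.Subset.refl _) (P.R_subset_stepR R j)
  have h1 : P.rk j (P.propose (P.stepR R) j) ≤ P.rk j s :=
    hmin' s (mem_sdiff.2 ⟨mem_univ _, hsR'⟩)
  have h2 : P.rk j s ≤ P.rk j (P.propose (P.stepR R) j) := hmin _ (hsub hmem')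
  exact P.rk_inj j (le_antisymm h1 h2)

lemma filled_step {P : SchoolChoice I S} {R : I → Finset S}
    (hR : ∀ j, P.nullSchool ∉ R j) (s : S)
    (hq : P.quota s ≤ (P.App R s).card) :
    P.quota s ≤ (P.App (P.stepR R) s).card := by
  set A := P.App R s with hA
  set q := P.quota s with hqdef
  set f : I → ℕ := fun j => (A.filter fun k => P.prio s k < P.prio s j).card with hf
  have key : ∀ a ∈ A, ∀ b ∈ A, P.prio s a < P.prio s b → f a < f b := by
    intro a ha b hb hab
    apply card_lt_card
    have hsub : (A.filter fun k => P.prio s k < P.prio s a)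
        ⊆ A.filter fun k => P.prio s k < P.prio s b := by
      intro k hk
      simp only [mem_filter] at hk ⊢
      exact ⟨hk.1, hk.2.trans hab⟩
    refine (Finset.ssubset_iff_of_subset hsub).2 ⟨a, ?_, ?_⟩
    · simp [ha, hab]
    · simp
  have hinj : Set.InjOn f ↑A := by
    intro a ha b hb hfab
    simp only [Finset.mem_coe] at ha hb
    by_contra hne
    have hpne : P.prio s a ≠ P.prio s b := fun h => hne (P.prio_inj s h)
    rcases lt_or_gt_of_ne hpne with h | h
    · exact absurd hfab (Nat.ne_of_lt (key a ha b hb h))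
    · exact absurd hfab.symm (Nat.ne_of_lt (key b hb a ha h))
  have hlt : ∀ j ∈ A, f j < A.card := by
    intro j hj
    have hsub : (A.filter fun k => P.prio s k < P.prio s j) ⊆ A.erase j := by
      intro k hk
      simp only [mem_filter] at hk
      exact mem_erase.2 ⟨fun h => absurd hk.2 (by simp [h]), hk.1⟩
    have hc := card_le_card hsub
    have h1 : 1 ≤ A.card := card_pos.2 ⟨j, hj⟩
    rw [card_erase_of_mem hj] at hc
    have : f j ≤ A.card - 1 := hc
    omega
  have himg : A.image f = range A.card := by
    apply eq_of_subset_of_card_le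
    · intro m hm
      obtain ⟨j, hj, rfl⟩ := mem_image.1 hm
      exact mem_range.2 (hlt j hj)
    · rw [card_range, card_image_of_injOn hinj]
  set B := A.filter fun j => f j < q with hB
  have hBimg : B.image f = range q := by
    ext m
    simp only [mem_image, mem_range]
    constructor
    · rintro ⟨j, hj, rfl⟩
      exact (mem_filter.1 hj).2
    · intro hm
      have hm' : m ∈ A.image f := by rw [himg]; exact mem_range.2 (lt_of_lt_of_le hm hq)
      obtain ⟨j, hj, rfl⟩ := mem_image.1 hm'
      exact ⟨j, mem_filter.2 ⟨hj, hm⟩, rfl⟩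
  have hBcard : B.card = q := by
    have hBsubA : B ⊆ A := by rw [hB]; exact filter_subset _ _
    have hc := card_image_of_injOn (hinj.mono (Finset.coe_subset.2 hBsubA))
    rw [hBimg, card_range] at hc
    exact hc.symm
  have hBsub : B ⊆ P.App (P.stepR R) s := by
    intro j hj
    obtain ⟨hjA, hjq⟩ := mem_filter.1 hj
    have hprop : P.propose R j = s := mem_App.1 hjA
    have hrej : ¬ P.rejectsAt R s j := by
      intro hr
      have hr2 := hr.2
      rw [P.rejectsAt_filter_eq, ← hA] at hr2
      have : q ≤ f j := hr2
      omega
    exact mem_App.2 (propose_step_eq (hR j) hprop hrej)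
  calc q = B.card := hBcard.symm
    _ ≤ _ := card_le_card hBsub

lemma null_notin_daR (P : SchoolChoice I S) : ∀ (m : ℕ) (i : I), P.nullSchool ∉ P.daR m i := by
  intro m
  induction m with
  | zero => intro i; simp [daR]
  | succ m ih =>
    intro i
    show P.nullSchool ∉ P.stepR (P.daR m) i
    simp only [stepR, mem_union, mem_filter, mem_univ, true_and]
    push_neg
    refine ⟨ih i, fun hr => ?_⟩
    have h1 := quota_add_one_le hr
    have h2 : (P.App (P.daR m) P.nullSchool).card ≤ Fintype.card I :=
      le_trans (card_le_univ _) (le_of_eq card_univ)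
    rw [P.quota_null] at h1
    omega

lemma filled_daR (P : SchoolChoice I S) (s : S) {m k : ℕ} (hmk : m ≤ k)
    (h : P.quota s ≤ (P.App (P.daR m) s).card) :
    P.quota s ≤ (P.App (P.daR k) s).card := by
  induction k with
  | zero =>
    have : m = 0 := Nat.le_zero.1 hmk
    exact this ▸ h
  | succ k ih =>
    rcases Nat.lt_or_ge m (k+1) with h' | h'
    · have hk := ih (Nat.lt_succ_iff.1 h')
      exact filled_step (fun j => P.null_notin_daR k j) s hk
    · have : m = k+1 := le_antisymm hmk h'
      exact this ▸ h

lemma DA_ne_null (P : SchoolChoice I S) (n : ℕ)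
    (hcard : Fintype.card S = n + 1)
    (hrk : ∀ i : I, P.rk i P.nullSchool = n + 1)
    (hquota : Fintype.card I
      ≤ ∑ s ∈ Finset.univ.filter (fun s => s ≠ P.nullSchool), P.quota s)
    (i0 : I) : P.DA i0 ≠ P.nullSchool := by
  intro hda
  set N := Fintype.card I * Fintype.card S + 1 with hN
  have hprop : P.propose (P.daR N) i0 = P.nullSchool := hda
  have step1 : ∀ s : S, s ≠ P.nullSchool → s ∈ P.daR N i0 := by
    intro s hs
    by_contra hcon
    have hne : (univ \ P.daR N i0).Nonempty := ⟨s, mem_sdiff.2 ⟨mem_univ _, hcon⟩⟩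
    obtain ⟨_, hmin⟩ := P.propose_spec (P.daR N) i0 hne
    have hle1 := hmin s (mem_sdiff.2 ⟨mem_univ _, hcon⟩)
    rw [hprop, hrk] at hle1
    have hle2 := (mem_Icc.1 (P.rk_mem i0 s)).2
    rw [hcard] at hle2
    have heq : P.rk i0 s = n + 1 := le_antisymm hle2 hle1
    exact hs (P.rk_inj i0 (heq.trans (hrk i0).symm))
  have step2 : ∀ s : S, s ≠ P.nullSchool →
      P.quota s ≤ (P.App (P.daR N) s).card := by
    intro s hs
    have hex : ∃ m, s ∈ P.daR m i0 := ⟨N, step1 s hs⟩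
    have hmem := Nat.find_spec hex
    have hm0N : Nat.find hex ≤ N := Nat.find_le (step1 s hs)
    have hm0pos : Nat.find hex ≠ 0 := by
      intro h0
      rw [h0] at hmem
      simp [daR] at hmem
    obtain ⟨m, hm⟩ := Nat.exists_eq_succ_of_ne_zero hm0pos
    have hnot : s ∉ P.daR m i0 := Nat.find_min hex (by omega)
    rw [hm] at hmem
    have hrej : P.rejectsAt (P.daR m) s i0 := by
      have hmem' : s ∈ P.stepR (P.daR m) i0 := hmem
      simp only [stepR, mem_union, mem_filter, mem_univ, true_and] at hmem'
      tauto
    have hfill : P.quota s ≤ (P.App (P.daR m) s).card := by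
      have := quota_add_one_le hrej; omega
    exact P.filled_daR s (by omega) hfill
  have hbi : ((univ.filter fun s => s ≠ P.nullSchool) : Finset S).biUnion
      (fun s => P.App (P.daR N) s)
      = univ.filter fun j => P.propose (P.daR N) j ≠ P.nullSchool := by
    ext j
    simp only [mem_biUnion, mem_filter, mem_univ, true_and, mem_App]
    constructor
    · rintro ⟨s, hs, rfl⟩; exact hs
    · intro h; exact ⟨_, h, rfl⟩
  have hsum : ∑ s ∈ univ.filter (fun s => s ≠ P.nullSchool), (P.App (P.daR N) s).card
      = (univ.filter fun j => P.propose (P.daR N) j ≠ P.nullSchool).card := by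
    rw [← hbi]
    refine (card_biUnion ?_).symm
    intro x hx y hy hxy
    rw [Function.onFun, Finset.disjoint_left]
    intro a hax hay
    exact hxy ((mem_App.1 hax).symm.trans (mem_App.1 hay))
  have hlast : (univ.filter fun j => P.propose (P.daR N) j ≠ P.nullSchool)
      ⊆ univ.erase i0 := by
    intro j hj
    simp only [mem_filter, mem_univ, true_and] at hj
    exact mem_erase.2 ⟨fun h => hj (h ▸ hprop), mem_univ _⟩
  have hc1 := card_le_card hlast
  rw [card_erase_of_mem (mem_univ i0), card_univ] at hc1
  have hsumle : ∑ s ∈ univ.filter (fun s => s ≠ P.nullSchool), P.quota s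
      ≤ ∑ s ∈ univ.filter (fun s => s ≠ P.nullSchool), (P.App (P.daR N) s).card :=
    Finset.sum_le_sum (fun s hs => step2 s (mem_filter.1 hs).2)
  have hIpos : 1 ≤ Fintype.card I := Fintype.card_pos_iff.2 ⟨i0⟩
  omega

lemma rk_DA_le (P : SchoolChoice I S) (n : ℕ)
    (hcard : Fintype.card S = n + 1)
    (hrk : ∀ i : I, P.rk i P.nullSchool = n + 1)
    (hquota : Fintype.card I
      ≤ ∑ s ∈ Finset.univ.filter (fun s => s ≠ P.nullSchool), P.quota s)
    (i : I) : P.rk i (P.DA i) ≤ n := by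
  have h1 := (mem_Icc.1 (P.rk_mem i (P.DA i))).2
  rw [hcard] at h1
  have h2 : P.rk i (P.DA i) ≠ n + 1 := fun h =>
    P.DA_ne_null n hcard hrk hquota i (P.rk_inj i (h.trans (hrk i).symm))
  omega

lemma DA_eq_of_top (P : SchoolChoice I S) (μ : I → S) (hμ : P.IsMatching μ)
    (h1 : ∀ j, P.rk j (μ j) = 1) : ∀ i, P.DA i = μ i := by
  have hprop0 : ∀ j, P.propose (fun _ => (∅ : Finset S)) j = μ j := by
    intro j
    have hne : ((univ : Finset S) \ (fun _ => (∅ : Finset S)) j).Nonempty :=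
      ⟨μ j, by simp⟩
    obtain ⟨hmem, hmin⟩ := P.propose_spec (fun _ => (∅ : Finset S)) j hne
    have ha := hmin (μ j) (by simp)
    rw [h1 j] at ha
    have hb := (mem_Icc.1 (P.rk_mem j (P.propose (fun _ => (∅ : Finset S)) j))).1
    exact P.rk_inj j ((le_antisymm ha hb).trans (h1 j).symm)
  have hApp : ∀ s : S, P.App (fun _ => (∅ : Finset S)) s
      = univ.filter fun j => μ j = s := by
    intro s; ext j; simp [App, hprop0]
  have hnorej : ∀ (s : S) (i : I), ¬ P.rejectsAt (fun _ => (∅ : Finset S)) s i := by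
    intro s i hr
    have hge := quota_add_one_le hr
    rw [hApp] at hge
    have := hμ s
    omega
  have hdaR : ∀ m, P.daR m = fun _ => (∅ : Finset S) := by
    intro m
    induction m with
    | zero => rfl
    | succ m ih =>
      funext i
      show P.stepR (P.daR m) i = ∅
      rw [ih]
      simp [stepR, hnorej]
  intro i
  show P.propose (P.daR _) i = μ i
  rw [hdaR]
  exact hprop0 i

end SchoolChoice

/-- Upper bound on Rawlsian inequality.  In a school choice
problem with `n ≥ 2` ordinary schools besides the null school, where every
student ranks every ordinary school above the null school and the ordinary
schools' total quota is at least `|I|`, every stable-dominating matching `ν`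
satisfies `2 · max_i rk_i(ν i) ≤ n · max_i rk_i(μ i)` for every matching `μ`
(i.e. `2 · max rk(ν) ≤ n · min_μ max rk(μ)`). -/
theorem rawlsian_upper_bound {I S : Type} [Fintype I] [Fintype S]
    [DecidableEq I] [DecidableEq S] (P : SchoolChoice I S) (n : ℕ) (hn : 2 ≤ n)
    (hcard : Fintype.card S = n + 1)
    (hrk : ∀ i : I, P.rk i P.nullSchool = n + 1)
    (hquota : Fintype.card I
      ≤ ∑ s ∈ Finset.univ.filter (fun s => s ≠ P.nullSchool), P.quota s)
    (ν : I → S) (hν : P.StableDominating ν)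
    (μ : I → S) (hμ : P.IsMatching μ) :
    2 * (Finset.univ.sup fun i : I => P.rk i (ν i))
      ≤ n * (Finset.univ.sup fun i : I => P.rk i (μ i)) := by
  classical
  rcases isEmpty_or_nonempty I with hI | hI
  · simp [Finset.univ_eq_empty]
  · obtain ⟨i0⟩ := hI
    set M := (Finset.univ.sup fun i : I => P.rk i (μ i)) with hM
    have hMle : P.rk i0 (μ i0) ≤ M := by
      rw [hM]; exact Finset.le_sup (f := fun i : I => P.rk i (μ i)) (Finset.mem_univ i0)
    have hM1 : 1 ≤ M :=
      le_trans (Finset.mem_Icc.1 (P.rk_mem i0 (μ i0))).1 hMle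
    rcases eq_or_lt_of_le hM1 with hM1' | hM2
    · have htop : ∀ j, P.rk j (μ j) = 1 := by
        intro j
        have h2 : P.rk j (μ j) ≤ M := by
          rw [hM]; exact Finset.le_sup (f := fun i : I => P.rk i (μ i)) (Finset.mem_univ j)
        have h3 := (Finset.mem_Icc.1 (P.rk_mem j (μ j))).1
        omega
      have hDA := P.DA_eq_of_top μ hμ htop
      have hsν : (Finset.univ.sup fun i : I => P.rk i (ν i)) ≤ 1 := by
        apply Finset.sup_le
        intro i _
        have h := hν.2 i
        rw [hDA i, htop i] at h
        exact h
      have h2 : 2 * (Finset.univ.sup fun i : I => P.rk i (ν i)) ≤ 2 := by omega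
      have h3 : n * M = n := by rw [← hM1', mul_one]
      omega
    · have hsν : (Finset.univ.sup fun i : I => P.rk i (ν i)) ≤ n := by
        apply Finset.sup_le
        intro i _
        exact le_trans (hν.2 i) (P.rk_DA_le n hcard hrk hquota i)
      calc 2 * (Finset.univ.sup fun i : I => P.rk i (ν i)) ≤ 2 * n :=
            Nat.mul_le_mul_left 2 hsν
        _ = n * 2 := Nat.mul_comm 2 n
        _ ≤ n * M := Nat.mul_le_mul_left n hM2
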